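/- Let T be a simple graph that is a tree (connected and acyclic), let r be a vertex of T, and let (x_n)_{n∈ℕ} be a sequence of vertices of T. Then the following are equivalent: (i) for every M ∈ ℕ there exists N such that for all i, j ≥ N one has d(x_i, r) + d(x_j, r) − d(x_i, x_j) ≥ M (i.e. the sequence is admissible: the Gromov products at r tend to infinity); (ii) there exists a sequence of vertices (J_k)_{k∈ℕ} with J_0 = r, with J_k adjacent to J_{k+1} and d(r, J_k) = k for all k, such that for every k there exists N with d(r, x_n) = k + d(J_k, x_n) for all n ≥ N (i.e. the vertex J_k lies on the unique geodesic from r to x_n for all n sufficiently large). -/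

import Mathlib

open SimpleGraph Walk

section TreeLemmas

variable {V : Type*} {T : SimpleGraph V}

/-- In a tree, every path realizes the distance between its endpoints. -/
private lemma tree_path_length (hT : T.IsTree) {u v : V} (p : T.Walk u v)
    (hp : p.IsPath) : p.length = T.dist u v := by
  obtain ⟨q, hq, hql⟩ := hT.isConnected.exists_path_of_dist u v
  have hpq : p = q := (hT.existsUnique_path u v).unique hp hq
  rw [hpq, hql]

/-- Distances along a path in a tree. -/
private lemma dist_getVert (hT : T.IsTree) {u v : V} (p : T.Walk u v) :
    ∀ (_ : p.IsPath) (k : ℕ), k ≤ p.length →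
      T.dist u (p.getVert k) = k ∧ T.dist (p.getVert k) v = p.length - k := by
  induction p with
  | nil =>
    intro _ k hk
    have hk0 : k = 0 := Nat.le_zero.mp hk
    subst hk0
    simp [SimpleGraph.dist_self]
  | @cons a b c h q ih =>
    intro hp k hk
    have hq : q.IsPath := hp.of_cons
    have hlen : (Walk.cons h q).length = T.dist a c := tree_path_length hT _ hp
    rcases Nat.eq_zero_or_pos k with rfl | hk0
    · refine ⟨by simp [SimpleGraph.dist_self], ?_⟩
      simpa using hlen.symm
    · obtain ⟨k, rfl⟩ := Nat.exists_eq_succ_of_ne_zero hk0.ne'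
      have hk' : k ≤ q.length := by simpa [Nat.succ_le_succ_iff] using hk
      obtain ⟨ih1, ih2⟩ := ih hq k hk'
      rw [getVert_cons_succ]
      have hab : T.dist a b = 1 := SimpleGraph.dist_eq_one_iff_adj.mpr h
      have tri1 : T.dist a (q.getVert k) ≤ T.dist a b + T.dist b (q.getVert k) :=
        hT.isConnected.dist_triangle
      have tri2 : T.dist a c ≤ T.dist a (q.getVert k) + T.dist (q.getVert k) c :=
        hT.isConnected.dist_triangle
      have hlc : (Walk.cons h q).length = q.length + 1 := by simp
      constructor
      · omega
      · omega

/-- In a tree, if `r` is not on the geodesic from `a` to `b`, then the geodesics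
from `r` to `a` and from `r` to `b` start with the same edge. -/
private lemma first_step (hT : T.IsTree) {r a b : V}
    (h : T.dist a b + 1 ≤ T.dist r a + T.dist r b) :
    ∃ r', T.Adj r r' ∧ T.dist r a = T.dist r' a + 1 ∧ T.dist r b = T.dist r' b + 1 := by
  have hconn := hT.isConnected
  have hra : r ≠ a := by
    rintro rfl
    have h0 : T.dist r r = 0 := SimpleGraph.dist_self
    omega
  have hrb : r ≠ b := by
    rintro rfl
    have h0 : T.dist r r = 0 := SimpleGraph.dist_self
    have hc : T.dist a r = T.dist r a := T.dist_comm
    omega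
  classical
  obtain ⟨p, hp, hpl⟩ := hconn.exists_path_of_dist r a
  obtain ⟨q, hq, hql⟩ := hconn.exists_path_of_dist r b
  cases p with
  | nil => exact absurd rfl hra
  | @cons _ b1 _ h1 p' =>
    cases q with
    | nil => exact absurd rfl hrb
    | @cons _ b2 _ h2 q' =>
      have hp' : p'.IsPath := hp.of_cons
      have hq' : q'.IsPath := hq.of_cons
      have hrp' : r ∉ p'.support := ((Walk.cons_isPath_iff _ _).mp hp).2
      have hrq' : r ∉ q'.support := ((Walk.cons_isPath_iff _ _).mp hq).2
      have hp'l : p'.length = T.dist b1 a := tree_path_length hT p' hp'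
      have hq'l : q'.length = T.dist b2 b := tree_path_length hT q' hq'
      have hda : T.dist r a = T.dist b1 a + 1 := by
        rw [← hpl, ← hp'l]; simp
      have hdb : T.dist r b = T.dist b2 b + 1 := by
        rw [← hql, ← hq'l]; simp
      by_cases hbb : b1 = b2
      · subst hbb
        exact ⟨b1, h1, hda, hdb⟩
      · exfalso
        -- supports intersect only in r
        have key : ∀ v, v ∈ p'.support → v ∈ q'.support → False := by
          intro v hv1 hv2
          have hvr1 : v ≠ r := fun hv => hrp' (hv ▸ hv1)
          have P1 : (Walk.cons h1 (p'.takeUntil v hv1)).IsPath :=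
            (hp'.takeUntil hv1).cons
              (fun hc => hrp' (p'.support_takeUntil_subset hv1 hc))
          have Q1 : (Walk.cons h2 (q'.takeUntil v hv2)).IsPath :=
            (hq'.takeUntil hv2).cons
              (fun hc => hrq' (q'.support_takeUntil_subset hv2 hc))
          have hPQ : Walk.cons h1 (p'.takeUntil v hv1) = Walk.cons h2 (q'.takeUntil v hv2) :=
            (hT.existsUnique_path r v).unique P1 Q1
          have : b1 = b2 := by
            have e1 : (Walk.cons h1 (p'.takeUntil v hv1)).getVert 1 = b1 :=
              (getVert_cons_succ (n := 0) _ h1).trans (getVert_zero _)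
            have e2 : (Walk.cons h2 (q'.takeUntil v hv2)).getVert 1 = b2 :=
              (getVert_cons_succ (n := 0) _ h2).trans (getVert_zero _)
            rw [← e1, ← e2, hPQ]
          exact hbb this
        set P : T.Walk r a := Walk.cons h1 p' with hP
        set Q : T.Walk r b := Walk.cons h2 q' with hQ
        have hW : (P.reverse.append Q).IsPath := by
          rw [Walk.isPath_def, Walk.support_append, Walk.support_reverse]
          refine List.Nodup.append ?_ ?_ ?_
          · exact (List.nodup_reverse).mpr hp.support_nodup
          · exact hq.support_nodup.sublist (List.tail_sublist _)
          · intro v hv1 hv2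
            have hv1' : v ∈ P.support := List.mem_reverse.mp hv1
            have hv2' : v ∈ q'.support := by
              simpa [hQ, Walk.support_cons] using hv2
            rcases (by simpa [hP, Walk.support_cons] using hv1' : v = r ∨ v ∈ p'.support) with
              rfl | hvp
            · exact hrq' hv2'
            · exact key v hvp hv2'
        have hlen : (P.reverse.append Q).length = T.dist r a + T.dist r b := by
          rw [Walk.length_append, Walk.length_reverse, hpl, hql]
        have : T.dist a b = T.dist r a + T.dist r b := by
          rw [← tree_path_length hT _ hW, hlen]
        omega

/-- In a tree, if the Gromov product of `a` and `b` at `r` is at least `k`, then there is a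
vertex `w` at distance `k` from `r` lying on both geodesics from `r`. -/
private lemma gromov_center (hT : T.IsTree) :
    ∀ (k : ℕ) (r a b : V), T.dist a b + 2 * k ≤ T.dist r a + T.dist r b →
      ∃ w, T.dist r w = k ∧ T.dist r a = k + T.dist w a ∧ T.dist r b = k + T.dist w b := by
  intro k
  induction k with
  | zero =>
    intro r a b _
    exact ⟨r, SimpleGraph.dist_self, by simp, by simp⟩
  | succ k ih =>
    intro r a b h
    obtain ⟨r', hadj, ha, hb⟩ := first_step hT (r := r) (a := a) (b := b) (by omega)
    obtain ⟨w, hw, hwa, hwb⟩ := ih r' a b (by omega)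
    have hrr' : T.dist r r' = 1 := SimpleGraph.dist_eq_one_iff_adj.mpr hadj
    have tri1 : T.dist r w ≤ T.dist r r' + T.dist r' w := hT.isConnected.dist_triangle
    have tri2 : T.dist r a ≤ T.dist r w + T.dist w a := hT.isConnected.dist_triangle
    exact ⟨w, by omega, by omega, by omega⟩

/-- In a tree, the vertex at distance `k` from `r` on the geodesic from `r` to `a`
is unique. -/
private lemma center_unique (hT : T.IsTree) {r a w w' : V} {k : ℕ}
    (h1 : T.dist r w = k) (h2 : T.dist r a = k + T.dist w a)
    (h3 : T.dist r w' = k) (h4 : T.dist r a = k + T.dist w' a) : w = w' := by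
  have hconn := hT.isConnected
  obtain ⟨g1, hg1⟩ := hconn.exists_walk_length_eq_dist r w
  obtain ⟨g2, hg2⟩ := hconn.exists_walk_length_eq_dist w a
  obtain ⟨g1', hg1'⟩ := hconn.exists_walk_length_eq_dist r w'
  obtain ⟨g2', hg2'⟩ := hconn.exists_walk_length_eq_dist w' a
  have hWlen : (g1.append g2).length = T.dist r a := by
    rw [Walk.length_append, hg1, hg2, h1, h2]
  have hWlen' : (g1'.append g2').length = T.dist r a := by
    rw [Walk.length_append, hg1', hg2', h3, h4]
  have hW : (g1.append g2).IsPath := Walk.isPath_of_length_eq_dist _ hWlen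
  have hW' : (g1'.append g2').IsPath := Walk.isPath_of_length_eq_dist _ hWlen'
  have heq : g1.append g2 = g1'.append g2' := (hT.existsUnique_path r a).unique hW hW'
  have e1 : (g1.append g2).getVert k = w := by
    rw [Walk.getVert_append]
    simp [hg1, h1, Walk.getVert_length]
  have e2 : (g1'.append g2').getVert k = w' := by
    rw [Walk.getVert_append]
    simp [hg1', h3, Walk.getVert_length]
  rw [← e1, ← e2, heq]

end TreeLemmas

/-- In a tree with basepoint `r`, a sequence of vertices is admissible (its Gromov
products at `r` tend to infinity) if and only if there is a geodesic ray from `r`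
through which the geodesics from `r` to the terms of the sequence eventually pass. -/
theorem admissible_iff_exists_geodesic_ray
    {V : Type*} (T : SimpleGraph V) (hT : T.IsTree) (r : V) (x : ℕ → V) :
    (∀ M : ℕ, ∃ N : ℕ, ∀ i j : ℕ, N ≤ i → N ≤ j →
        T.dist (x i) (x j) + M ≤ T.dist (x i) r + T.dist (x j) r) ↔
      (∃ J : ℕ → V, J 0 = r ∧ (∀ k, T.Adj (J k) (J (k + 1))) ∧
        (∀ k, T.dist r (J k) = k) ∧
        ∀ k, ∃ N : ℕ, ∀ n : ℕ, N ≤ n →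
          T.dist r (x n) = k + T.dist (J k) (x n)) := by
  have hconn := hT.isConnected
  constructor
  · intro h
    choose N hN using h
    have key : ∀ k : ℕ, ∃ w, T.dist r w = k ∧
        ∀ n, N (2 * k) ≤ n → T.dist r (x n) = k + T.dist w (x n) := by
      intro k
      have h0 := hN (2 * k) (N (2 * k)) (N (2 * k)) le_rfl le_rfl
      have c1 : T.dist (x (N (2 * k))) r = T.dist r (x (N (2 * k))) := T.dist_comm
      obtain ⟨w, hw, hwa, -⟩ :=
        gromov_center hT k r (x (N (2 * k))) (x (N (2 * k))) (by omega)
      refine ⟨w, hw, fun n hn => ?_⟩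
      have h1 := hN (2 * k) (N (2 * k)) n le_rfl hn
      have c2 : T.dist (x n) r = T.dist r (x n) := T.dist_comm
      obtain ⟨w', hw', hwa', hwb'⟩ :=
        gromov_center hT k r (x (N (2 * k))) (x n) (by omega)
      have : w' = w := center_unique hT hw' hwa' hw hwa
      rw [← this]
      exact hwb'
    choose J hJ1 hJ2 using key
    have hJ0 : J 0 = r := (hconn.dist_eq_zero_iff.mp (hJ1 0)).symm
    have hadj : ∀ k, T.Adj (J k) (J (k + 1)) := by
      intro k
      set n := max (N (2 * k)) (N (2 * (k + 1))) with hn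
      have e1 : T.dist r (x n) = k + T.dist (J k) (x n) := hJ2 k n (le_max_left _ _)
      have e2 : T.dist r (x n) = (k + 1) + T.dist (J (k + 1)) (x n) :=
        hJ2 (k + 1) n (le_max_right _ _)
      obtain ⟨P, hP, hPl⟩ := hconn.exists_path_of_dist r (x n)
      have hk1 : k + 1 ≤ P.length := by omega
      obtain ⟨g1, g2⟩ := dist_getVert hT P hP k (by omega)
      obtain ⟨g1', g2'⟩ := dist_getVert hT P hP (k + 1) hk1
      have f1 : T.dist r (x n) = k + T.dist (P.getVert k) (x n) := by omega
      have f2 : T.dist r (x n) = (k + 1) + T.dist (P.getVert (k + 1)) (x n) := by omega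
      have eq1 : J k = P.getVert k := center_unique hT (hJ1 k) e1 g1 f1
      have eq2 : J (k + 1) = P.getVert (k + 1) := center_unique hT (hJ1 (k + 1)) e2 g1' f2
      rw [eq1, eq2]
      exact P.adj_getVert_succ (by omega)
    exact ⟨J, hJ0, hadj, hJ1, fun k => ⟨N (2 * k), hJ2 k⟩⟩
  · rintro ⟨J, hJ0, hadj, hdist, hgeo⟩ M
    obtain ⟨N, hN⟩ := hgeo M
    refine ⟨N, fun i j hi hj => ?_⟩
    have h1 := hN i hi
    have h2 := hN j hj
    have tri : T.dist (x i) (x j) ≤ T.dist (x i) (J M) + T.dist (J M) (x j) :=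
      hconn.dist_triangle
    have c1 : T.dist (x i) r = T.dist r (x i) := T.dist_comm
    have c2 : T.dist (x j) r = T.dist r (x j) := T.dist_comm
    have c3 : T.dist (x i) (J M) = T.dist (J M) (x i) := T.dist_comm
    omega
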